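/- (Correctness of the double-sided (u,u+v) decoder.) Let t ≥ 1, n = 2^t, and y = (y₁, y₂) ∈ ℝ^{2n}. Suppose x = (x₁, x₂) ∈ BW_{2n} satisfies ‖y − x‖² < d(BW_{2n})/4. Then: (a) x is the unique point of BW_{2n} with ‖y − x‖² < d(BW_{2n})/4 (in particular it is the closest point of BW_{2n} to y); and (b) there exists i ∈ {1,2} such that x_i is the unique point u of BW_n with ‖y_i − u‖² < d(BW_n)/4, and the difference of the other half, x_{3−i} − x_i, is the unique point v of RBW_n with ‖(y_{3−i} − x_i) − v‖² < d(RBW_n)/4. Hence x is recovered by nearest-point decoding of one half in BW_n followed by nearest-point decoding of the corrected other half in RBW_n. -/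

import Mathlib

open Matrix

noncomputable section

/-- `Rmat n` is the `n × n` matrix `I_{n/2} ⊗ R(2)`, block diagonal with
`2 × 2` blocks `[[1, 1], [1, -1]]`, acting on row vectors on the right. -/
def Rmat (n : ℕ) : Matrix (Fin n) (Fin n) ℝ :=
  Matrix.of fun i j =>
    if (i : ℕ) / 2 = (j : ℕ) / 2 then
      if (i : ℕ) % 2 = 1 ∧ (j : ℕ) % 2 = 1 then -1 else 1
    else 0

/-- Concatenation `(u, v)` of two `2^t`-dimensional vectors into a
`2^(t+1)`-dimensional vector. -/
def concat {t : ℕ} (u v : Fin (2 ^ t) → ℝ) : Fin (2 ^ (t + 1)) → ℝ := fun i =>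
  if h : (i : ℕ) < 2 ^ t then u ⟨i, h⟩
  else v ⟨(i : ℕ) - 2 ^ t, by
    have hi := i.isLt
    have h2 : 2 ^ (t + 1) = 2 ^ t + 2 ^ t := by rw [pow_succ]; ring
    omega⟩

/-- The Barnes–Wall lattices `BW_{2^t} ⊆ ℝ^{2^t}`, defined recursively by
`BW_2 = ℤ²` and `BW_{2n} = {(u, u + v) : u ∈ BW_n, v ∈ BW_n · R(n)}`. -/
def BW : ∀ t : ℕ, Set (Fin (2 ^ t) → ℝ)
  | 0 => {x | ∀ i, ∃ z : ℤ, x i = (z : ℝ)}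
  | (t + 1) =>
    {x | ∃ u v : Fin (2 ^ t) → ℝ, u ∈ BW t ∧
      (∃ w ∈ BW t, v = Matrix.vecMul w (Rmat (2 ^ t))) ∧ x = concat u (u + v)}

/-- `RBW_n = {x · R(n) : x ∈ BW_n}`. -/
def RBW (t : ℕ) : Set (Fin (2 ^ t) → ℝ) :=
  (fun x => Matrix.vecMul x (Rmat (2 ^ t))) '' BW t

/-- Squared Euclidean norm. -/
def sqnorm {m : ℕ} (x : Fin m → ℝ) : ℝ := ∑ i, x i ^ 2

/-- `minDist Λ` is the minimum of `‖x‖²` over nonzero `x ∈ Λ`. -/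
def minDist {m : ℕ} (Λ : Set (Fin m → ℝ)) : ℝ :=
  sInf (sqnorm '' {x ∈ Λ | x ≠ 0})

/-! ### auxiliary lemmas -/

lemma pow_split (t : ℕ) : 2 ^ (t + 1) = 2 ^ t + 2 ^ t := by rw [pow_succ]; ring

def embL {t : ℕ} (i : Fin (2 ^ t)) : Fin (2 ^ (t + 1)) :=
  ⟨i, by have := i.isLt; have := pow_split t; omega⟩

def embR {t : ℕ} (i : Fin (2 ^ t)) : Fin (2 ^ (t + 1)) :=
  ⟨2 ^ t + i, by have := i.isLt; have := pow_split t; omega⟩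

lemma concat_apply_lt {t : ℕ} (u v : Fin (2 ^ t) → ℝ) (j : Fin (2 ^ (t + 1)))
    (h : (j : ℕ) < 2 ^ t) : concat u v j = u ⟨j, h⟩ := by
  simp only [concat]; rw [dif_pos h]

lemma concat_apply_ge {t : ℕ} (u v : Fin (2 ^ t) → ℝ) (j : Fin (2 ^ (t + 1)))
    (h : ¬ (j : ℕ) < 2 ^ t) : concat u v j = v ⟨(j : ℕ) - 2 ^ t, by
      have := j.isLt; have := pow_split t; omega⟩ := by
  simp only [concat]; rw [dif_neg h]

lemma concat_embL {t : ℕ} (u v : Fin (2 ^ t) → ℝ) (i : Fin (2 ^ t)) :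
    concat u v (embL i) = u i := by
  rw [concat_apply_lt u v _ i.isLt]
  congr 1

lemma concat_embR {t : ℕ} (u v : Fin (2 ^ t) → ℝ) (i : Fin (2 ^ t)) :
    concat u v (embR i) = v i := by
  rw [concat_apply_ge u v (embR i) (by simp [embR])]
  congr 1
  ext
  simp [embR]

lemma concat_sub {t : ℕ} (a b c d : Fin (2 ^ t) → ℝ) :
    concat a b - concat c d = concat (a - c) (b - d) := by
  funext j
  by_cases h : (j : ℕ) < 2 ^ t <;>
    simp [concat, h]

lemma concat_eq_iff {t : ℕ} {a b c d : Fin (2 ^ t) → ℝ}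
    (h : concat a b = concat c d) : a = c ∧ b = d := by
  constructor
  · funext i
    have := congrFun h (embL i)
    rwa [concat_embL, concat_embL] at this
  · funext i
    have := congrFun h (embR i)
    rwa [concat_embR, concat_embR] at this

lemma sqnorm_nonneg {m : ℕ} (x : Fin m → ℝ) : 0 ≤ sqnorm x :=
  Finset.sum_nonneg fun i _ => sq_nonneg _

lemma sqnorm_concat {t : ℕ} (u v : Fin (2 ^ t) → ℝ) :
    sqnorm (concat u v) = sqnorm u + sqnorm v := by
  unfold sqnorm
  rw [← Fin.sum_congr' (fun i => concat u v i ^ 2) (pow_split t).symm,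
    Fin.sum_univ_add]
  congr 1
  · apply Finset.sum_congr rfl
    intro i _
    congr 1
    rw [concat_apply_lt u v _ (by simp [Fin.castAdd])]
    congr 1
  · apply Finset.sum_congr rfl
    intro i _
    congr 1
    rw [concat_apply_ge u v _ (by simp [Fin.natAdd])]
    congr 1
    ext
    simp

lemma sqnorm_sub_le {m : ℕ} (y a b : Fin m → ℝ) :
    sqnorm (a - b) ≤ 2 * sqnorm (y - a) + 2 * sqnorm (y - b) := by
  unfold sqnorm
  rw [Finset.mul_sum, Finset.mul_sum, ← Finset.sum_add_distrib]
  apply Finset.sum_le_sum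
  intro i _
  simp only [Pi.sub_apply]
  nlinarith [sq_nonneg ((y i - a i) + (y i - b i))]

lemma minDist_le {m : ℕ} (Λ : Set (Fin m → ℝ)) {x : Fin m → ℝ}
    (hx : x ∈ Λ) (h0 : x ≠ 0) : minDist Λ ≤ sqnorm x := by
  apply csInf_le
  · refine ⟨0, ?_⟩
    rintro s ⟨z, _, rfl⟩
    exact sqnorm_nonneg z
  · exact ⟨x, ⟨hx, h0⟩, rfl⟩

lemma unique_close {m : ℕ} (Λ : Set (Fin m → ℝ))
    (hsub : ∀ a ∈ Λ, ∀ b ∈ Λ, a - b ∈ Λ)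
    {y a b : Fin m → ℝ} (ha : a ∈ Λ) (hb : b ∈ Λ)
    (hda : sqnorm (y - a) < minDist Λ / 4) (hdb : sqnorm (y - b) < minDist Λ / 4) :
    a = b := by
  by_contra hne
  have h1 : minDist Λ ≤ sqnorm (a - b) :=
    minDist_le Λ (hsub a ha b hb) (sub_ne_zero.mpr hne)
  have h2 := sqnorm_sub_le y a b
  linarith

/-! ### Rmat component formulas -/

lemma vecMulR_even {n : ℕ} (x : Fin n → ℝ) (j : Fin n) (hj : (j : ℕ) % 2 = 0)
    (hj1 : (j : ℕ) + 1 < n) :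
    Matrix.vecMul x (Rmat n) j = x j + x ⟨(j : ℕ) + 1, hj1⟩ := by
  have hn : Matrix.vecMul x (Rmat n) j = ∑ i, x i * Rmat n i j := by
    simp [Matrix.vecMul, dotProduct]
  rw [hn]
  rw [Finset.sum_eq_add j ⟨(j : ℕ) + 1, hj1⟩]
  · congr 1
    · simp [Rmat, hj]
    · simp only [Rmat, Matrix.of_apply]
      rw [if_pos (by omega)]
      rw [if_neg (by omega)]
      ring
  · intro h
    exact absurd (congrArg Fin.val h) (by simp)
  · rintro c - ⟨hc1, hc2⟩
    have hcv1 : (c : ℕ) ≠ (j : ℕ) := fun h => hc1 (Fin.ext h)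
    have hcv2 : (c : ℕ) ≠ (j : ℕ) + 1 := fun h => hc2 (Fin.ext h)
    simp only [Rmat, Matrix.of_apply]
    rw [if_neg (by omega)]
    ring
  · intro h
    exact absurd (Finset.mem_univ j) h
  · intro h
    exact absurd (Finset.mem_univ _) h

lemma vecMulR_odd {n : ℕ} (x : Fin n → ℝ) (j : Fin n) (hj : (j : ℕ) % 2 = 1) :
    Matrix.vecMul x (Rmat n) j
      = x ⟨(j : ℕ) - 1, by omega⟩ - x j := by
  have hn : Matrix.vecMul x (Rmat n) j = ∑ i, x i * Rmat n i j := by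
    simp [Matrix.vecMul, dotProduct]
  rw [hn]
  rw [Finset.sum_eq_add (⟨(j : ℕ) - 1, by omega⟩ : Fin n) j]
  · have h1 : x ⟨(j : ℕ) - 1, by omega⟩ * Rmat n ⟨(j : ℕ) - 1, by omega⟩ j
        = x ⟨(j : ℕ) - 1, by omega⟩ := by
      simp only [Rmat, Matrix.of_apply]
      rw [if_pos (by omega)]
      rw [if_neg (by omega)]
      ring
    have h2 : x j * Rmat n j j = - x j := by
      simp [Rmat, hj]
    rw [h1, h2]
    ring
  · intro h
    exact absurd (congrArg Fin.val h) (by simp; omega)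
  · rintro c - ⟨hc1, hc2⟩
    have hcv1 : (c : ℕ) ≠ (j : ℕ) - 1 := fun h => hc1 (Fin.ext h)
    have hcv2 : (c : ℕ) ≠ (j : ℕ) := fun h => hc2 (Fin.ext h)
    simp only [Rmat, Matrix.of_apply]
    rw [if_neg (by omega)]
    ring
  · intro h
    exact absurd (Finset.mem_univ _) h
  · intro h
    exact absurd (Finset.mem_univ _) h

set_option maxHeartbeats 1600000 in
lemma vecMul_Rmat_concat {t : ℕ} (ht : 1 ≤ t) (u w : Fin (2 ^ t) → ℝ) :
    Matrix.vecMul (concat u w) (Rmat (2 ^ (t + 1)))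
      = concat (Matrix.vecMul u (Rmat (2 ^ t))) (Matrix.vecMul w (Rmat (2 ^ t))) := by
  have hev : 2 ^ t % 2 = 0 := by
    have : 2 ^ t = 2 * 2 ^ (t - 1) := by
      rw [← pow_succ']
      congr 1
      omega
    omega
  have hsplit := pow_split t
  funext j
  rcases Nat.even_or_odd (j : ℕ) with hpar | hpar
  · have hj : (j : ℕ) % 2 = 0 := Nat.even_iff.mp hpar
    have hj1 : (j : ℕ) + 1 < 2 ^ (t + 1) := by
      have := j.isLt; omega
    rw [vecMulR_even _ j hj hj1]
    by_cases h : (j : ℕ) < 2 ^ t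
    · have h1 : (j : ℕ) + 1 < 2 ^ t := by omega
      rw [concat_apply_lt _ _ j h, concat_apply_lt _ _ _ (show ((⟨(j:ℕ)+1, hj1⟩ : Fin (2^(t+1))) : ℕ) < 2 ^ t from h1),
        concat_apply_lt _ _ j h]
      rw [vecMulR_even u ⟨(j : ℕ), h⟩ hj h1]
    · have hge : 2 ^ t ≤ (j : ℕ) := not_lt.mp h
      have hj2 : (j : ℕ) - 2 ^ t < 2 ^ t := by have := j.isLt; omega
      have hjm : ((j : ℕ) - 2 ^ t) % 2 = 0 := by omega
      have hjm1 : ((j : ℕ) - 2 ^ t) + 1 < 2 ^ t := by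
        have := j.isLt; omega
      rw [concat_apply_ge _ _ j h,
        concat_apply_ge _ _ _ (show ¬ ((⟨(j:ℕ)+1, hj1⟩ : Fin (2^(t+1))) : ℕ) < 2 ^ t by simp; omega),
        concat_apply_ge _ _ j h]
      rw [vecMulR_even w ⟨(j : ℕ) - 2 ^ t, hj2⟩ hjm hjm1]
      congr 2
      simp
      omega
  · have hj : (j : ℕ) % 2 = 1 := Nat.odd_iff.mp hpar
    rw [vecMulR_odd _ j hj]
    by_cases h : (j : ℕ) < 2 ^ t
    · have h1 : (j : ℕ) - 1 < 2 ^ t := by omega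
      rw [concat_apply_lt _ _ j h,
        concat_apply_lt _ _ _ (show ((⟨(j:ℕ)-1, by omega⟩ : Fin (2^(t+1))) : ℕ) < 2 ^ t from h1),
        concat_apply_lt _ _ j h]
      rw [vecMulR_odd u ⟨(j : ℕ), h⟩ hj]
    · have hge : 2 ^ t ≤ (j : ℕ) := not_lt.mp h
      have hj2 : (j : ℕ) - 2 ^ t < 2 ^ t := by have := j.isLt; omega
      have hjm : ((j : ℕ) - 2 ^ t) % 2 = 1 := by omega
      rw [concat_apply_ge _ _ j h,
        concat_apply_ge _ _ _ (show ¬ ((⟨(j:ℕ)-1, by omega⟩ : Fin (2^(t+1))) : ℕ) < 2 ^ t by simp; omega),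
        concat_apply_ge _ _ j h]
      rw [vecMulR_odd w ⟨(j : ℕ) - 2 ^ t, hj2⟩ hjm]
      congr 2
      simp
      omega

lemma Rmat_one : Rmat 1 = 1 := by
  ext i j
  fin_cases i <;> fin_cases j <;> simp [Rmat]

lemma vecMul_Rmat_one (x : Fin (2 ^ 0) → ℝ) :
    Matrix.vecMul x (Rmat (2 ^ 0)) = x := by
  show Matrix.vecMul x (Rmat 1) = x
  rw [Rmat_one, Matrix.vecMul_one]

lemma bw_zero : ∀ t, (0 : Fin (2 ^ t) → ℝ) ∈ BW t := by
  intro t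
  induction t with
  | zero => exact fun i => ⟨0, by simp⟩
  | succ t ih =>
    refine ⟨0, 0, ih, ⟨0, ih, by rw [Matrix.zero_vecMul]⟩, ?_⟩
    funext j
    by_cases h : (j : ℕ) < 2 ^ t
    · rw [concat_apply_lt _ _ j h]; simp
    · rw [concat_apply_ge _ _ j h]; simp

lemma bw_sub : ∀ t, ∀ a ∈ BW t, ∀ b ∈ BW t, a - b ∈ BW t := by
  intro t
  induction t with
  | zero =>
    rintro a ha b hb i
    obtain ⟨z1, hz1⟩ := ha i
    obtain ⟨z2, hz2⟩ := hb i
    exact ⟨z1 - z2, by simp [Pi.sub_apply, hz1, hz2]⟩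
  | succ t ih =>
    rintro a ⟨u, v, hu, ⟨w, hw, rfl⟩, rfl⟩ b ⟨u', v', hu', ⟨w', hw', rfl⟩, rfl⟩
    refine ⟨u - u', Matrix.vecMul (w - w') (Rmat (2 ^ t)), ih u hu u' hu',
      ⟨w - w', ih w hw w' hw', rfl⟩, ?_⟩
    rw [concat_sub]
    congr 1
    rw [Matrix.sub_vecMul]
    abel

lemma bw_neg (t : ℕ) {a : Fin (2 ^ t) → ℝ} (ha : a ∈ BW t) : -a ∈ BW t := by
  have := bw_sub t 0 (bw_zero t) a ha
  simpa using this

lemma bw_add (t : ℕ) {a b : Fin (2 ^ t) → ℝ} (ha : a ∈ BW t) (hb : b ∈ BW t) :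
    a + b ∈ BW t := by
  have := bw_sub t a ha (-b) (bw_neg t hb)
  simpa using this

lemma ones_mem : ∀ t, (fun _ => (1 : ℝ) : Fin (2 ^ t) → ℝ) ∈ BW t := by
  intro t
  induction t with
  | zero => exact fun i => ⟨1, by simp⟩
  | succ t ih =>
    refine ⟨fun _ => 1, 0, ih, ⟨0, bw_zero t, by rw [Matrix.zero_vecMul]⟩, ?_⟩
    funext j
    by_cases h : (j : ℕ) < 2 ^ t
    · rw [concat_apply_lt _ _ j h]
    · rw [concat_apply_ge _ _ j h]; simp

lemma ones_ne (t : ℕ) : (fun _ => (1 : ℝ) : Fin (2 ^ t) → ℝ) ≠ 0 := by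
  intro h
  have := congrFun h ⟨0, Nat.pow_pos (by norm_num)⟩
  simp at this

lemma bw_one_char (x : Fin (2 ^ 1) → ℝ) :
    x ∈ BW 1 ↔ ∀ i, ∃ z : ℤ, x i = (z : ℝ) := by
  constructor
  · rintro ⟨u, v, hu, ⟨w, hw, rfl⟩, rfl⟩ i
    rw [vecMul_Rmat_one w]
    by_cases h : (i : ℕ) < 2 ^ 0
    · rw [concat_apply_lt _ _ i h]
      exact hu _
    · rw [concat_apply_ge _ _ i h]
      obtain ⟨z1, hz1⟩ := hu ⟨(i : ℕ) - 2 ^ 0, by have := i.isLt; have := pow_split 0; omega⟩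
      obtain ⟨z2, hz2⟩ := hw ⟨(i : ℕ) - 2 ^ 0, by have := i.isLt; have := pow_split 0; omega⟩
      refine ⟨z1 + z2, ?_⟩
      simp only [Pi.add_apply]
      rw [hz1, hz2]
      push_cast
      ring
  · intro h
    obtain ⟨z0, hz0⟩ := h ⟨0, by norm_num⟩
    obtain ⟨z1, hz1⟩ := h ⟨1, by norm_num⟩
    refine ⟨fun _ => (z0 : ℝ), fun _ => ((z1 - z0 : ℤ) : ℝ), fun _ => ⟨z0, rfl⟩,
      ⟨fun _ => ((z1 - z0 : ℤ) : ℝ), fun _ => ⟨z1 - z0, rfl⟩, by rw [vecMul_Rmat_one]⟩, ?_⟩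
    funext j
    by_cases hj : (j : ℕ) < 2 ^ 0
    · rw [concat_apply_lt _ _ j hj]
      have : j = ⟨0, by norm_num⟩ := by ext; simpa using hj
      rw [this, hz0]
    · rw [concat_apply_ge _ _ j hj]
      have hje : j = ⟨1, by norm_num⟩ := by
        ext; have := j.isLt; simp at hj ⊢; omega
      have hx : x j = ((z1 : ℤ) : ℝ) := by rw [congrArg x hje, hz1]
      rw [hx]
      simp only [Pi.add_apply]
      push_cast
      ring

lemma bw_R_mem : ∀ t, ∀ x ∈ BW t, Matrix.vecMul x (Rmat (2 ^ t)) ∈ BW t := by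
  intro t
  induction t with
  | zero =>
    intro x hx
    rw [vecMul_Rmat_one]
    exact hx
  | succ t ih =>
    rcases Nat.eq_zero_or_pos t with rfl | ht
    · intro x hx
      rw [bw_one_char] at hx ⊢
      intro i
      have h01 : ((0 : ℕ)) < 2 ^ 1 := by norm_num
      have h11 : ((1 : ℕ)) < 2 ^ 1 := by norm_num
      obtain ⟨z0, hz0⟩ := hx ⟨0, h01⟩
      obtain ⟨z1, hz1⟩ := hx ⟨1, h11⟩
      rcases Nat.even_or_odd (i : ℕ) with hpar | hpar
      · have hj : (i : ℕ) % 2 = 0 := Nat.even_iff.mp hpar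
        have hi0 : i = ⟨0, h01⟩ := by ext; have := i.isLt; simp at this ⊢; omega
        subst hi0
        rw [vecMulR_even x _ (by simp) (by norm_num)]
        exact ⟨z0 + z1, by rw [hz0, hz1]; push_cast; ring⟩
      · have hj : (i : ℕ) % 2 = 1 := Nat.odd_iff.mp hpar
        have hi1 : i = ⟨1, h11⟩ := by ext; have := i.isLt; simp at this ⊢; omega
        subst hi1
        rw [vecMulR_odd x _ (by simp)]
        refine ⟨z0 - z1, ?_⟩
        have : (⟨(1 : ℕ) - 1, by norm_num⟩ : Fin (2 ^ 1)) = ⟨0, h01⟩ := by ext; simp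
        rw [this, hz0, hz1]
        push_cast; ring
    · rintro x ⟨u, v, hu, ⟨w, hw, rfl⟩, rfl⟩
      rw [vecMul_Rmat_concat ht]
      refine ⟨Matrix.vecMul u (Rmat (2 ^ t)),
        Matrix.vecMul (Matrix.vecMul w (Rmat (2 ^ t))) (Rmat (2 ^ t)),
        ih u hu, ⟨Matrix.vecMul w (Rmat (2 ^ t)), ih w hw, rfl⟩, ?_⟩
      congr 1
      rw [Matrix.add_vecMul]

lemma rbw_subset_bw (t : ℕ) (ht : 1 ≤ t) : RBW t ⊆ BW t := by
  rintro v ⟨w, hw, rfl⟩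
  exact bw_R_mem t w hw

lemma rbw_zero (t : ℕ) : (0 : Fin (2 ^ t) → ℝ) ∈ RBW t :=
  ⟨0, bw_zero t, by show Matrix.vecMul 0 (Rmat (2 ^ t)) = 0; rw [Matrix.zero_vecMul]⟩

lemma rbw_sub (t : ℕ) : ∀ a ∈ RBW t, ∀ b ∈ RBW t, a - b ∈ RBW t := by
  rintro a ⟨w, hw, rfl⟩ b ⟨w', hw', rfl⟩
  exact ⟨w - w', bw_sub t w hw w' hw',
    by show Matrix.vecMul (w - w') (Rmat (2 ^ t)) = _; rw [Matrix.sub_vecMul]⟩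

lemma rbw_neg (t : ℕ) {a : Fin (2 ^ t) → ℝ} (ha : a ∈ RBW t) : -a ∈ RBW t := by
  have := rbw_sub t 0 (rbw_zero t) a ha
  simpa using this

lemma sqnorm_zero {m : ℕ} : sqnorm (0 : Fin m → ℝ) = 0 := by simp [sqnorm]

lemma concat_ne_zero_left {t : ℕ} {u v : Fin (2 ^ t) → ℝ} (hu : u ≠ 0) :
    concat u v ≠ 0 := by
  intro h
  apply hu
  funext i
  have h2 := congrFun h (embL i)
  rw [concat_embL] at h2
  simpa using h2

lemma concat_ne_zero_right {t : ℕ} {u v : Fin (2 ^ t) → ℝ} (hv : v ≠ 0) :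
    concat u v ≠ 0 := by
  intro h
  apply hv
  funext i
  have h2 := congrFun h (embR i)
  rw [concat_embR] at h2
  simpa using h2

lemma concat_mem_bw {t : ℕ} {u v : Fin (2 ^ t) → ℝ} (hu : u ∈ BW t) (hv : v ∈ RBW t) :
    concat u (u + v) ∈ BW (t + 1) := by
  obtain ⟨w, hw, hvw⟩ := hv
  exact ⟨u, v, hu, ⟨w, hw, hvw.symm⟩, rfl⟩

lemma minDist_succ_le (t : ℕ) : minDist (BW (t + 1)) ≤ 2 * minDist (BW t) := by
  have hne : (sqnorm '' {x ∈ BW t | x ≠ 0}).Nonempty :=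
    ⟨sqnorm (fun _ => (1 : ℝ)), ⟨(fun _ => (1 : ℝ)), ⟨ones_mem t, ones_ne t⟩, rfl⟩⟩
  have h : minDist (BW (t + 1)) / 2 ≤ minDist (BW t) := by
    refine le_csInf hne ?_
    rintro s ⟨x, ⟨hx, hx0⟩, rfl⟩
    have hmem : concat x x ∈ BW (t + 1) := by
      have := concat_mem_bw hx (rbw_zero t)
      rwa [add_zero] at this
    have hle := minDist_le (BW (t + 1)) hmem (concat_ne_zero_left hx0)
    rw [sqnorm_concat] at hle
    linarith
  linarith

lemma rbw_ne_zero (t : ℕ) (ht : 1 ≤ t) :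
    ∃ v ∈ RBW t, v ≠ 0 := by
  refine ⟨Matrix.vecMul (fun _ => (1 : ℝ)) (Rmat (2 ^ t)), ⟨_, ones_mem t, rfl⟩, ?_⟩
  intro h
  have h1 : (1 : ℕ) < 2 ^ t := by
    have : 2 ^ 1 ≤ 2 ^ t := Nat.pow_le_pow_right (by norm_num) ht
    omega
  have h0 : (0 : ℕ) < 2 ^ t := by omega
  have := congrFun h ⟨0, h0⟩
  rw [vecMulR_even _ ⟨0, h0⟩ (by simp) (by simpa using h1)] at this
  simp at this

lemma minDist_le_rbw (t : ℕ) (ht : 1 ≤ t) :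
    minDist (BW (t + 1)) ≤ minDist (RBW t) := by
  obtain ⟨v₀, hv₀, hv₀ne⟩ := rbw_ne_zero t ht
  have hne : (sqnorm '' {x ∈ RBW t | x ≠ 0}).Nonempty :=
    ⟨sqnorm v₀, ⟨v₀, ⟨hv₀, hv₀ne⟩, rfl⟩⟩
  refine le_csInf hne ?_
  rintro s ⟨v, ⟨hv, hvne⟩, rfl⟩
  have hmem : concat 0 v ∈ BW (t + 1) := by
    have := concat_mem_bw (bw_zero t) hv
    rwa [zero_add] at this
  have hle := minDist_le (BW (t + 1)) hmem (concat_ne_zero_right hvne)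
  rw [sqnorm_concat, sqnorm_zero] at hle
  linarith

/-- Correctness of the double-sided `(u,u+v)` decoder: if
`x = (x₁,x₂) ∈ BW_{2n}` satisfies `‖y − x‖² < d(BW_{2n})/4`, then (a) `x` is the
unique point of `BW_{2n}` within squared distance `d(BW_{2n})/4` of `y`, and
(b) for some `i ∈ {1,2}`, `x_i` is the unique point `u ∈ BW_n` with
`‖y_i − u‖² < d(BW_n)/4` and `x_{3−i} − x_i` is the unique point `v ∈ RBW_n`
with `‖(y_{3−i} − x_i) − v‖² < d(RBW_n)/4`. -/
theorem bw_double_sided_decoder_correct :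
    ∀ t : ℕ, 1 ≤ t → ∀ y₁ y₂ x₁ x₂ : Fin (2 ^ t) → ℝ,
      concat x₁ x₂ ∈ BW (t + 1) →
      sqnorm (concat y₁ y₂ - concat x₁ x₂) < minDist (BW (t + 1)) / 4 →
      (∀ x' ∈ BW (t + 1),
        sqnorm (concat y₁ y₂ - x') < minDist (BW (t + 1)) / 4 →
        x' = concat x₁ x₂) ∧
      (((∀ u : Fin (2 ^ t) → ℝ,
          (u ∈ BW t ∧ sqnorm (y₁ - u) < minDist (BW t) / 4) ↔ u = x₁) ∧
        (∀ v : Fin (2 ^ t) → ℝ,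
          (v ∈ RBW t ∧ sqnorm (y₂ - x₁ - v) < minDist (RBW t) / 4) ↔ v = x₂ - x₁)) ∨
       ((∀ u : Fin (2 ^ t) → ℝ,
          (u ∈ BW t ∧ sqnorm (y₂ - u) < minDist (BW t) / 4) ↔ u = x₂) ∧
        (∀ v : Fin (2 ^ t) → ℝ,
          (v ∈ RBW t ∧ sqnorm (y₁ - x₂ - v) < minDist (RBW t) / 4) ↔ v = x₁ - x₂))) := by
  intro t ht y₁ y₂ x₁ x₂ hx herr
  have hmem := hx
  obtain ⟨u, v, hu, ⟨w, hw, hvw⟩, heq⟩ := hx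
  obtain ⟨hx1, hx2⟩ := concat_eq_iff heq
  have hx1BW : x₁ ∈ BW t := hx1 ▸ hu
  have hvR : x₂ - x₁ ∈ RBW t := by
    have hd : x₂ - x₁ = v := by rw [hx1, hx2]; abel
    rw [hd, hvw]
    exact ⟨w, hw, rfl⟩
  have hx2BW : x₂ ∈ BW t := by
    have h2 := bw_add t hx1BW (rbw_subset_bw t ht hvR)
    rwa [add_sub_cancel] at h2
  have herr' := herr
  rw [concat_sub, sqnorm_concat] at herr'
  set A := sqnorm (y₁ - x₁) with hA_def
  set B := sqnorm (y₂ - x₂) with hB_def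
  have hA0 : 0 ≤ A := sqnorm_nonneg _
  have hB0 : 0 ≤ B := sqnorm_nonneg _
  have hD2 : minDist (BW (t + 1)) ≤ 2 * minDist (BW t) := minDist_succ_le t
  have hDR : minDist (BW (t + 1)) ≤ minDist (RBW t) := minDist_le_rbw t ht
  constructor
  · intro x' hx' hlt
    exact unique_close (BW (t + 1)) (bw_sub (t + 1)) hx' hmem hlt herr
  · have he1 : y₂ - x₁ - (x₂ - x₁) = y₂ - x₂ := by abel
    have he2 : y₁ - x₂ - (x₁ - x₂) = y₁ - x₁ := by abel
    by_cases hA : A < minDist (BW t) / 4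
    · left
      constructor
      · intro u'
        constructor
        · rintro ⟨hu', hlt⟩
          exact unique_close (BW t) (bw_sub t) hu' hx1BW hlt hA
        · rintro rfl
          exact ⟨hx1BW, hA⟩
      · intro v'
        have hBR : sqnorm (y₂ - x₁ - (x₂ - x₁)) < minDist (RBW t) / 4 := by
          rw [he1, ← hB_def]
          linarith
        constructor
        · rintro ⟨hv', hlt⟩
          exact unique_close (RBW t) (rbw_sub t) hv' hvR hlt hBR
        · rintro rfl
          exact ⟨hvR, hBR⟩
    · right
      have hB : B < minDist (BW t) / 4 := by linarith [not_lt.mp hA]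
      constructor
      · intro u'
        constructor
        · rintro ⟨hu', hlt⟩
          exact unique_close (BW t) (bw_sub t) hu' hx2BW hlt hB
        · rintro rfl
          exact ⟨hx2BW, hB⟩
      · intro v'
        have hvR' : x₁ - x₂ ∈ RBW t := by
          have := rbw_neg t hvR
          rwa [neg_sub] at this
        have hAR : sqnorm (y₁ - x₂ - (x₁ - x₂)) < minDist (RBW t) / 4 := by
          rw [he2, ← hA_def]
          linarith
        constructor
        · rintro ⟨hv', hlt⟩
          exact unique_close (RBW t) (rbw_sub t) hv' hvR' hlt hAR
        · rintro rfl
          exact ⟨hvR', hAR⟩
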